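/- Let $V$ be a finite set with $|V|$ divisible by $k$, let $\mathcal{M}$ be a partition of $V$ into blocks of size exactly $k$, and let $M = \{(u,v) : u \ne v, \exists F \in \mathcal{M} \text{ with } u,v \in F\}$ be the set of intra-block pairs. Then for every $S \subseteq V$, the number of pairs in $M$ with exactly one endpoint in $S$ is at least $\mathrm{sur}(S) \cdot (k - \mathrm{sur}(S))$, where $\mathrm{sur}(S) = |S| \bmod k$. -/

import Mathlib

open scoped Classical

lemma key_mod (k s t : ℕ) (hk : 1 ≤ k) (hs : s < k) (ht : t < k) :
    ((s + t) % k) * (k - (s + t) % k) ≤ s * (k - s) + t * (k - t) := by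
  rcases lt_or_ge (s + t) k with h | h
  · rw [Nat.mod_eq_of_lt h]
    zify [hs.le, ht.le, h.le]
    nlinarith
  · have h2 : s + t < 2 * k := by omega
    have hmod : (s + t) % k = s + t - k := by
      rw [Nat.mod_eq_sub_mod h, Nat.mod_eq_of_lt (by omega)]
    rw [hmod]
    zify [hs.le, ht.le, h, show s + t - k ≤ k by omega]
    nlinarith

lemma per_elem (k a : ℕ) (ha : a ≤ k) :
    (a % k) * (k - a % k) ≤ a * (k - a) := by
  rcases lt_or_eq_of_le ha with h | rfl
  · rw [Nat.mod_eq_of_lt h]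
  · simp

lemma sum_lem {ι : Type*} [DecidableEq ι] (k : ℕ) (hk : 1 ≤ k) (s : Finset ι) (a : ι → ℕ)
    (ha : ∀ i ∈ s, a i ≤ k) :
    ((∑ i ∈ s, a i) % k) * (k - (∑ i ∈ s, a i) % k) ≤ ∑ i ∈ s, a i * (k - a i) := by
  induction s using Finset.induction with
  | empty => simp
  | insert x s' hx ih =>
    rw [Finset.sum_insert hx, Finset.sum_insert hx]
    have hax := ha x (Finset.mem_insert_self x s')
    have ih' := ih (fun i hi => ha i (Finset.mem_insert_of_mem hi))
    set T := ∑ i ∈ s', a i with hT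
    have h1 : (a x + T) % k = (a x % k + T % k) % k := by rw [Nat.add_mod]
    rw [h1]
    calc (a x % k + T % k) % k * (k - (a x % k + T % k) % k)
        ≤ (a x % k) * (k - a x % k) + (T % k) * (k - T % k) :=
          key_mod k _ _ hk (Nat.mod_lt _ hk) (Nat.mod_lt _ hk)
      _ ≤ a x * (k - a x) + ∑ i ∈ s', a i * (k - a i) :=
          Nat.add_le_add (per_elem k _ hax) ih'

theorem stmt10 {V : Type*} [Fintype V] [DecidableEq V] (k : ℕ) (hk : 1 ≤ k)
    (M : Finset (Finset V)) (hcard : ∀ F ∈ M, F.card = k)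
    (hpart : ∀ v : V, ∃! F, F ∈ M ∧ v ∈ F)
    (S : Finset V) :
    (S.card % k) * (k - S.card % k) ≤
      ((Finset.univ : Finset (V × V)).filter
        (fun q => q.1 ∈ S ∧ q.2 ∉ S ∧ ∃ F ∈ M, q.1 ∈ F ∧ q.2 ∈ F)).card := by
  classical
  -- uniqueness helper
  have huniq : ∀ {F F' : Finset V} {v : V}, F ∈ M → F' ∈ M → v ∈ F → v ∈ F' → F = F' := by
    intro F F' v hF hF' hv hv'
    obtain ⟨G, _, hG⟩ := hpart v
    rw [hG F ⟨hF, hv⟩, hG F' ⟨hF', hv'⟩]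
  set P := ((Finset.univ : Finset (V × V)).filter
        (fun q => q.1 ∈ S ∧ q.2 ∉ S ∧ ∃ F ∈ M, q.1 ∈ F ∧ q.2 ∈ F)) with hP
  set U := M.biUnion (fun F => (S ∩ F) ×ˢ (F \ S)) with hU
  have hsub : U ⊆ P := by
    intro q hq
    simp only [hU, Finset.mem_biUnion, Finset.mem_product, Finset.mem_inter,
      Finset.mem_sdiff] at hq
    obtain ⟨F, hF, ⟨hq1S, hq1F⟩, hq2F, hq2S⟩ := hq
    simp only [hP, Finset.mem_filter, Finset.mem_univ, true_and]
    exact ⟨hq1S, hq2S, F, hF, hq1F, hq2F⟩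
  have hdisj : ∀ F ∈ M, ∀ F' ∈ M, F ≠ F' →
      Disjoint ((S ∩ F) ×ˢ (F \ S)) ((S ∩ F') ×ˢ (F' \ S)) := by
    intro F hF F' hF' hne
    rw [Finset.disjoint_left]
    intro q hq hq'
    simp only [Finset.mem_product, Finset.mem_inter, Finset.mem_sdiff] at hq hq'
    exact hne (huniq hF hF' hq.1.2 hq'.1.2)
  have hcardU : U.card = ∑ F ∈ M, (S ∩ F).card * ((F \ S).card) := by
    rw [hU, Finset.card_biUnion hdisj]
    exact Finset.sum_congr rfl (fun F _ => Finset.card_product _ _)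
  have hFS : ∀ F ∈ M, (F \ S).card = k - (S ∩ F).card := by
    intro F hF
    have : F \ S = F \ (S ∩ F) := by
      ext v; simp only [Finset.mem_sdiff, Finset.mem_inter]; tauto
    rw [this, Finset.card_sdiff_of_subset (Finset.inter_subset_right), hcard F hF]
  have hSsum : ∑ F ∈ M, (S ∩ F).card = S.card := by
    have hS : S = M.biUnion (fun F => S ∩ F) := by
      ext v
      simp only [Finset.mem_biUnion, Finset.mem_inter]
      constructor
      · intro hv
        obtain ⟨F, ⟨hF, hvF⟩, _⟩ := hpart v
        exact ⟨F, hF, hv, hvF⟩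
      · rintro ⟨F, _, hv, _⟩; exact hv
    conv_rhs => rw [hS]
    rw [Finset.card_biUnion]
    intro F hF F' hF' hne
    rw [Function.onFun, Finset.disjoint_left]
    intro v hv hv'
    simp only [Finset.mem_inter] at hv hv'
    exact hne (huniq hF hF' hv.2 hv'.2)
  have hbound : ∀ F ∈ M, (S ∩ F).card ≤ k := by
    intro F hF
    rw [← hcard F hF]
    exact Finset.card_le_card Finset.inter_subset_right
  calc (S.card % k) * (k - S.card % k)
      = ((∑ F ∈ M, (S ∩ F).card) % k) * (k - (∑ F ∈ M, (S ∩ F).card) % k) := by rw [hSsum]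
    _ ≤ ∑ F ∈ M, (S ∩ F).card * (k - (S ∩ F).card) := sum_lem k hk M _ hbound
    _ = ∑ F ∈ M, (S ∩ F).card * ((F \ S).card) :=
        Finset.sum_congr rfl (fun F hF => by rw [hFS F hF])
    _ = U.card := hcardU.symm
    _ ≤ P.card := Finset.card_le_card hsub
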